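/- Let X = {0, 1, abstain}. The majority-testing-with-abstention family of functions (f_n : X^n → {0,1})_{n≥1} defined by f_n(x) = 1 if |{i : x_i = 1}| ≥ |{i : x_i = 0}| and f_n(x) = 0 otherwise, is computable. -/

import Mathlib

/-- A finite bidirectional connected network on `n` nodes, with port labelings:
each node `i` has a bijection between its neighbors and the port numbers
`{0, …, deg(i) - 1}`. -/
structure PortNetwork (n : ℕ) where
  adj : Fin n → Fin n → Bool
  symm : ∀ i j, adj i j → adj j i
  loopless : ∀ i, ¬ adj i i
  connected : ∀ i j : Fin n, Relation.ReflTransGen (fun a b => adj a b) i j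
  port : ∀ i : Fin n, {j // adj i j} ≃ Fin (Fintype.card {j // adj i j})

/-- The degree of node `i`. -/
def PortNetwork.deg {n : ℕ} (N : PortNetwork n) (i : Fin n) : ℕ :=
  Fintype.card {j // N.adj i j}

/-- An algorithm: a family of transition functions
`A_d : X × Z_d × Y × M^d → Z_d × Y × M^d`, together with the distinguished
initial ("∅") elements of `Z_d`, `Y`, `M`. -/
structure Algorithm (X Y M : Type) (Z : ℕ → Type) where
  trans : ∀ d : ℕ, X → Z d → Y → (Fin d → M) → Z d × Y × (Fin d → M)
  z0 : ∀ d, Z d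
  y0 : Y
  m0 : M

/-- The synchronous evolution of the network: `A.run N x t i` is the state
`(z_i(t), y_i(t), (m_{i,p}(t))_p)` of node `i` at time `t`, starting from
initial values `x`.  At each round, node `i` receives through its `k`-th port
the message sent by the neighbor `j_k` on that port, namely the message that
`j_k` put on its own port leading back to `i`. -/
def Algorithm.run {X Y M : Type} {Z : ℕ → Type} (A : Algorithm X Y M Z) {n : ℕ}
    (N : PortNetwork n) (x : Fin n → X) :
    ℕ → ∀ i : Fin n, Z (N.deg i) × Y × (Fin (N.deg i) → M)
  | 0 => fun _ => (A.z0 _, A.y0, fun _ => A.m0)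
  | t + 1 => fun i =>
      A.trans (N.deg i) (x i) (A.run N x t i).1 (A.run N x t i).2.1
        (fun k =>
          let j := (N.port i).symm k
          (A.run N x t j.1).2.2 (N.port j.1 ⟨i, N.symm _ _ j.2⟩))

/-- `y` is the final output of the execution of `A` on the network `N` with
initial values `x`. -/
def Algorithm.FinalOutput {X Y M : Type} {Z : ℕ → Type} (A : Algorithm X Y M Z) {n : ℕ}
    (N : PortNetwork n) (x : Fin n → X) (y : Y) : Prop :=
  ∃ t', ∀ t, t' ≤ t → ∀ i, (A.run N x t i).2.1 = y

/-- A family of functions `(f_n : X^n → Y)_{n ≥ 1}` is computable if there is an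
algorithm with `Y`, `M` and all `Z_d` finite which, on every connected network
with ports and every input, produces the final output `f_n(x)`. -/
def ComputableFamily {X Y : Type} (f : ∀ n, (Fin n → X) → Y) : Prop :=
  ∃ (M : Type) (Z : ℕ → Type) (A : Algorithm X Y M Z),
    Finite Y ∧ Finite M ∧ (∀ d, Finite (Z d)) ∧
    ∀ n, 0 < n → ∀ (N : PortNetwork n) (x : Fin n → X),
      A.FinalOutput N x (f n x)

/-- Computability with infinite memory: `Y` and the `Z_d` are allowed to be
countable (the message alphabet `M` stays finite). -/
def ComputableWithInfiniteMemory {X Y : Type} (f : ∀ n, (Fin n → X) → Y) : Prop :=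
  ∃ (M : Type) (Z : ℕ → Type) (A : Algorithm X Y M Z),
    Countable Y ∧ Finite M ∧ (∀ d, Countable (Z d)) ∧
    ∀ n, 0 < n → ∀ (N : PortNetwork n) (x : Fin n → X),
      A.FinalOutput N x (f n x)

/-- The input alphabet `X = {0, 1, abstain}`. -/
inductive Vote : Type
  | zero : Vote
  | one : Vote
  | abstain : Vote
deriving DecidableEq


namespace MWA
open Finset

/-! ### Generic helpers -/

lemma exists_stab (f : ℕ → ℕ) (hf : ∀ t, f (t+1) ≤ f t) :
    ∃ T, ∀ t, T ≤ t → f t = f T := by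
  have hmono : Antitone f := antitone_nat_of_succ_le hf
  have hne : (Set.range f).Nonempty := ⟨f 0, 0, rfl⟩
  obtain ⟨T, hT⟩ := Nat.sInf_mem hne
  refine ⟨T, fun t ht => le_antisymm (hmono ht) ?_⟩
  rw [hT]; exact Nat.sInf_le ⟨t, rfl⟩

lemma exists_cross (C : ℕ → ℕ) (h0 : C 0 = 0) (hub : ∀ B, ∃ s, B < C s) (V : ℕ) :
    ∃ s, C s ≤ V ∧ V < C (s+1) := by
  have hne : ∃ s, V < C s := hub V
  have hs0 : V < C (Nat.find hne) := Nat.find_spec hne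
  have hnz : Nat.find hne ≠ 0 := by
    intro h; rw [h, h0] at hs0; omega
  obtain ⟨s, hs⟩ := Nat.exists_eq_succ_of_ne_zero hnz
  refine ⟨s, ?_, by rw [hs] at hs0; exact hs0⟩
  have := Nat.find_min hne (m := s) (by omega)
  omega

/-! ### slot arithmetic -/

def slot (d r q : ℕ) : ℕ := (q + d - r % d) % d

lemma slot_lt {d : ℕ} (hd : 0 < d) (r q : ℕ) : slot d r q < d := Nat.mod_lt _ hd

lemma slot_add {d : ℕ} (hd : 0 < d) (r q : ℕ) : (slot d r q + r) % d = q % d := by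
  unfold slot
  have h1 : r % d ≤ q + d := le_trans (le_of_lt (Nat.mod_lt _ hd)) (by omega)
  calc ((q + d - r % d) % d + r) % d = (q + d - r % d + r) % d := Nat.mod_add_mod _ _ _
    _ = (q + d - r % d + r % d) % d := by
          rw [Nat.add_mod (q + d - r % d) r, Nat.add_mod (q + d - r % d) (r % d),
            Nat.mod_mod_of_dvd r dvd_rfl]
    _ = (q + d) % d := by rw [Nat.sub_add_cancel h1]
    _ = q % d := Nat.add_mod_right q d

lemma mod_cancel {d x y r : ℕ} (hx : x < d) (hy : y < d)
    (h : (x + r) % d = (y + r) % d) : x = y := by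
  have h2 : x ≡ y [MOD d] := Nat.ModEq.add_right_cancel' r h
  unfold Nat.ModEq at h2
  rwa [Nat.mod_eq_of_lt hx, Nat.mod_eq_of_lt hy] at h2

lemma card_slot_lt {d : ℕ} (hd : 0 < d) (r a : ℕ) (ha : a ≤ d) :
    (univ.filter fun k : Fin d => slot d r (k : ℕ) < a).card = a := by
  have hb := Finset.card_bij (s := univ.filter fun k : Fin d => slot d r (k : ℕ) < a)
    (t := Finset.range a) (i := fun k _ => slot d r (k : ℕ))
    (by intro k hk; simp only [mem_filter] at hk; exact Finset.mem_range.mpr hk.2)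
    (by
      intro k hk l hl h
      have hkl : (k : ℕ) % d = (l : ℕ) % d := by
        rw [← slot_add hd r (k : ℕ), ← slot_add hd r (l : ℕ), h]
      exact Fin.ext (by rwa [Nat.mod_eq_of_lt k.2, Nat.mod_eq_of_lt l.2] at hkl))
    (by
      intro j hj
      have hj' : j < a := Finset.mem_range.mp hj
      have hjd : j < d := lt_of_lt_of_le hj' ha
      have hx : slot d r ((j + r) % d) = j := by
        apply mod_cancel (slot_lt hd _ _) hjd
        rw [slot_add hd]
        exact Nat.mod_mod_of_dvd _ dvd_rfl
      refine ⟨⟨(j + r) % d, Nat.mod_lt _ hd⟩, ?_, ?_⟩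
      · simp only [mem_filter, mem_univ, true_and]
        simpa [hx] using hj'
      · simpa using hx)
  rw [hb, Finset.card_range]

lemma card_slot_between {d : ℕ} (hd : 0 < d) (r a b : ℕ) (hab : a ≤ b) (hb : b ≤ d) :
    (univ.filter fun k : Fin d => a ≤ slot d r (k : ℕ) ∧ slot d r (k : ℕ) < b).card = b - a := by
  have h1 := card_slot_lt hd r a (le_trans hab hb)
  have h2 := card_slot_lt hd r b hb
  have hsplit : (univ.filter fun k : Fin d => slot d r (k : ℕ) < b) =
      (univ.filter fun k : Fin d => slot d r (k : ℕ) < a) ∪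
      (univ.filter fun k : Fin d => a ≤ slot d r (k : ℕ) ∧ slot d r (k : ℕ) < b) := by
    ext k; simp only [mem_filter, mem_union, mem_univ, true_and]; omega
  have hdisj : Disjoint (univ.filter fun k : Fin d => slot d r (k : ℕ) < a)
      (univ.filter fun k : Fin d => a ≤ slot d r (k : ℕ) ∧ slot d r (k : ℕ) < b) := by
    rw [Finset.disjoint_left]
    intro k hk hk'
    simp only [mem_filter] at hk hk'
    omega
  rw [hsplit, Finset.card_union_of_disjoint hdisj, h1] at h2
  omega


/-! ### The algorithm -/

abbrev Yt := Fin 2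
abbrev Msg := Option Bool × Option Bool
abbrev Ch (d : ℕ) := Bool × Fin (d+1)
abbrev St (d : ℕ) := Ch d × Ch d
abbrev Zt (d : ℕ) := Option (St d)

def pcnt {d : ℕ} (ms : Fin d → Option Bool) (v : Bool) : ℕ :=
  (univ.filter fun k => ms k = some v).card

def chOutG (gb flag : Bool) (P G : ℕ) : ℕ :=
  if flag then (if 0 < P then (if gb then 1 else 0) else 0) else G

def chOutP (flag : Bool) (P : ℕ) : ℕ := if flag ∧ 0 < P then P - 1 else P

def mkRot (d v : ℕ) : Fin (d+1) :=
  if h : 0 < d then ⟨v % d, by have := Nat.mod_lt v h; omega⟩ else 0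

def chNext (gb : Bool) (d : ℕ) (ch : Ch d) (ms : Fin d → Option Bool) : Ch d :=
  (ch.1 && decide (pcnt ms false = 0),
   mkRot d ((ch.2 : ℕ) + (chOutG gb ch.1 (pcnt ms false) (pcnt ms true)
      + chOutP ch.1 (pcnt ms false))))

def chOut (gb : Bool) (d : ℕ) (ch : Ch d) (ms : Fin d → Option Bool) (k : Fin d) : Option Bool :=
  if slot d (ch.2 : ℕ) (k : ℕ) < chOutG gb ch.1 (pcnt ms false) (pcnt ms true) then some true
  else if slot d (ch.2 : ℕ) (k : ℕ) < chOutG gb ch.1 (pcnt ms false) (pcnt ms true)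
      + chOutP ch.1 (pcnt ms false) then some false
  else none

def ynext (y : Yt) {d : ℕ} (msA msB : Fin d → Option Bool) : Yt :=
  if 0 < pcnt msA false + pcnt msA true then 1
  else if 0 < pcnt msB false + pcnt msB true then 0 else y

def iSt (d : ℕ) (x : Vote) : St d :=
  ((decide (x = Vote.zero), mkRot d (if x = Vote.one then 1 else 0)),
   (decide (x = Vote.one), mkRot d (if x = Vote.zero then 1 else 0)))

def iOut (d : ℕ) (x : Vote) (k : Fin d) : Msg :=
  (if x = Vote.one ∧ (k : ℕ) = 0 then some false else none,
   if x = Vote.zero ∧ (k : ℕ) = 0 then some false else none)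

def algo : Algorithm Vote Yt Msg Zt where
  trans d x z y ms :=
    match z with
    | none => (some (iSt d x), (if x = Vote.zero then 0 else 1), iOut d x)
    | some st =>
        (some (chNext true d st.1 (fun k => (ms k).1), chNext false d st.2 (fun k => (ms k).2)),
         ynext y (fun k => (ms k).1) (fun k => (ms k).2),
         fun k => (chOut true d st.1 (fun k => (ms k).1) k,
                   chOut false d st.2 (fun k => (ms k).2) k))
  z0 _ := none
  y0 := 1
  m0 := (none, none)

/-! ### Network accessors -/

variable {n : ℕ} (N : PortNetwork n)

def nbr (i : Fin n) (k : Fin (N.deg i)) : Fin n := ((N.port i).symm k).1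

def nbrPort (i : Fin n) (k : Fin (N.deg i)) : Fin (N.deg (nbr N i k)) :=
  N.port (nbr N i k) ⟨i, N.symm _ _ ((N.port i).symm k).2⟩

variable (x : Fin n → Vote)

def st (t : ℕ) (i : Fin n) : Zt (N.deg i) := (algo.run N x t i).1
def yv (t : ℕ) (i : Fin n) : Yt := (algo.run N x t i).2.1
def snd2 (c : Bool) (t : ℕ) (i : Fin n) (k : Fin (N.deg i)) : Option Bool :=
  if c then ((algo.run N x t i).2.2 k).1 else ((algo.run N x t i).2.2 k).2
def rcv2 (c : Bool) (t : ℕ) (i : Fin n) (k : Fin (N.deg i)) : Option Bool :=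
  snd2 N x c t (nbr N i k) (nbrPort N i k)

lemma run_succ (t : ℕ) (i : Fin n) : algo.run N x (t+1) i =
    algo.trans (N.deg i) (x i) (st N x t i) (yv N x t i)
      (fun k => (algo.run N x t (nbr N i k)).2.2 (nbrPort N i k)) := rfl

lemma st_zero (i : Fin n) : st N x 0 i = none := rfl

lemma st_one (i : Fin n) : st N x 1 i = some (iSt (N.deg i) (x i)) := rfl

lemma yv_one (i : Fin n) : yv N x 1 i = if x i = Vote.zero then 0 else 1 := rfl

lemma snd2_one (c : Bool) (i : Fin n) (k : Fin (N.deg i)) :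
    snd2 N x c 1 i k = if (if c then x i = Vote.one else x i = Vote.zero) ∧ (k : ℕ) = 0
        then some false else none := by
  cases c <;> simp [snd2, run_succ, iOut, st_zero, algo] <;> rfl

lemma st_succ_some (t : ℕ) (i : Fin n) (s : St (N.deg i)) (hs : st N x t i = some s) :
    st N x (t+1) i = some (chNext true (N.deg i) s.1 (fun k => rcv2 N x true t i k),
      chNext false (N.deg i) s.2 (fun k => rcv2 N x false t i k)) := by
  unfold st
  rw [run_succ]
  show (algo.trans (N.deg i) (x i) (st N x t i) _ _).1 = _
  rw [hs]
  rfl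

lemma st_isSome (t : ℕ) (ht : 1 ≤ t) (i : Fin n) : ∃ s, st N x t i = some s := by
  induction t with
  | zero => omega
  | succ t ih =>
    rcases Nat.eq_or_lt_of_le ht with h | h
    · rw [← h]; exact ⟨_, st_one N x i⟩
    · obtain ⟨s, hs⟩ := ih (by omega)
      exact ⟨_, st_succ_some N x t i s hs⟩

lemma yv_succ_some (t : ℕ) (i : Fin n) (s : St (N.deg i)) (hs : st N x t i = some s) :
    yv N x (t+1) i = ynext (yv N x t i) (fun k => rcv2 N x true t i k)
      (fun k => rcv2 N x false t i k) := by
  unfold yv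
  rw [run_succ]
  show (algo.trans (N.deg i) (x i) (st N x t i) _ _).2.1 = _
  rw [hs]
  rfl

lemma snd2_succ_some (c : Bool) (t : ℕ) (i : Fin n) (s : St (N.deg i))
    (hs : st N x t i = some s) (k : Fin (N.deg i)) :
    snd2 N x c (t+1) i k = chOut c (N.deg i) (if c then s.1 else s.2)
      (fun k => rcv2 N x c t i k) k := by
  unfold snd2
  rw [run_succ]
  show (if c then ((algo.trans (N.deg i) (x i) (st N x t i) _ _).2.2 k).1 else _) = _
  rw [hs]
  cases c <;> rfl

section Net
variable {n : ℕ} (N : PortNetwork n)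

def flip : (Σ i : Fin n, Fin (N.deg i)) → (Σ i : Fin n, Fin (N.deg i)) :=
  fun z => ⟨nbr N z.1 z.2, nbrPort N z.1 z.2⟩

lemma flip_flip (z : Σ i : Fin n, Fin (N.deg i)) : flip N (flip N z) = z := by
  obtain ⟨i, k⟩ := z
  have h1 : flip N (flip N ⟨i, k⟩) =
      (fun j : {j // N.adj (nbr N i k) j = true} =>
        (⟨j.1, N.port j.1 ⟨nbr N i k, N.symm _ _ j.2⟩⟩ : Σ i : Fin n, Fin (N.deg i)))
      ((N.port (nbr N i k)).symm (nbrPort N i k)) := rfl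
  rw [h1]
  have h2 : (N.port (nbr N i k)).symm (nbrPort N i k)
      = ⟨i, N.symm _ _ ((N.port i).symm k).2⟩ := Equiv.symm_apply_apply _ _
  rw [h2]
  show (⟨i, N.port i ⟨nbr N i k, _⟩⟩ : Σ i : Fin n, Fin (N.deg i)) = ⟨i, k⟩
  have h3 : ∀ (h : N.adj i (nbr N i k) = true),
      (⟨nbr N i k, h⟩ : {j // N.adj i j = true}) = (N.port i).symm k :=
    fun h => Subtype.ext rfl
  rw [h3]
  exact congrArg (Sigma.mk i) (Equiv.apply_symm_apply _ _)

lemma sum_flip (g : (Σ i : Fin n, Fin (N.deg i)) → ℕ) :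
    ∑ z : Σ i : Fin n, Fin (N.deg i), g (flip N z) = ∑ z : Σ i : Fin n, Fin (N.deg i), g z :=
  Function.Bijective.sum_comp (Function.Involutive.bijective (flip_flip N)) g

lemma nbr_port (i j : Fin n) (h : N.adj i j = true) : nbr N i (N.port i ⟨j, h⟩) = j := by
  unfold nbr; rw [Equiv.symm_apply_apply]

lemma deg_pos (hn : 2 ≤ n) (i : Fin n) : 0 < N.deg i := by
  have hex : ∃ j : Fin n, j ≠ i := by
    by_cases h : i = ⟨0, by omega⟩
    · exact ⟨⟨1, by omega⟩, by subst h; intro hc; simpa using congrArg Fin.val hc⟩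
    · exact ⟨⟨0, by omega⟩, fun hc => h hc.symm⟩
  obtain ⟨j, hj⟩ := hex
  rcases (Relation.ReflTransGen.cases_head (N.connected i j)) with h | ⟨c, hc, _⟩
  · exact absurd h.symm hj
  · exact Fintype.card_pos_iff.mpr ⟨⟨c, hc⟩⟩

lemma deg_zero_of_one (i : Fin 1) (N1 : PortNetwork 1) : N1.deg i = 0 := by
  refine Fintype.card_eq_zero_iff.mpr ⟨fun j => ?_⟩
  obtain ⟨j, hj⟩ := j
  have hji : j = i := Subsingleton.elim _ _
  exact absurd (hji ▸ hj) (by simpa using N1.loopless i)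

end Net
end MWA
namespace MWA
open Finset

/-! ### Abstract token channel -/

structure Chan {n : ℕ} (N : PortNetwork n) where
  gb : Bool
  spawn : Fin n → Bool
  flag0 : Fin n → Bool
  snd : ∀ _ : ℕ, ∀ i : Fin n, Fin (N.deg i) → Option Bool
  flg : ℕ → Fin n → Bool
  rot : ℕ → Fin n → ℕ
  hdeg : ∀ i, 0 < N.deg i
  hsnd1 : ∀ i k, snd 1 i k = if spawn i = true ∧ (k : ℕ) = 0 then some false else none
  hflg1 : ∀ i, flg 1 i = flag0 i
  hflg : ∀ t, 1 ≤ t → ∀ i, flg (t+1) i =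
    (flg t i && decide (pcnt (fun k => snd t (nbr N i k) (nbrPort N i k)) false = 0))
  hsnd : ∀ t, 1 ≤ t → ∀ i (k : Fin (N.deg i)), snd (t+1) i k =
    (if slot (N.deg i) (rot t i) (k : ℕ) <
        chOutG gb (flg t i) (pcnt (fun k => snd t (nbr N i k) (nbrPort N i k)) false)
          (pcnt (fun k => snd t (nbr N i k) (nbrPort N i k)) true) then some true
     else if slot (N.deg i) (rot t i) (k : ℕ) <
        chOutG gb (flg t i) (pcnt (fun k => snd t (nbr N i k) (nbrPort N i k)) false)
          (pcnt (fun k => snd t (nbr N i k) (nbrPort N i k)) true)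
        + chOutP (flg t i) (pcnt (fun k => snd t (nbr N i k) (nbrPort N i k)) false)
     then some false else none)
  hrot : ∀ t, 1 ≤ t → ∀ i, rot (t+1) i % N.deg i =
    (rot t i + (chOutG gb (flg t i) (pcnt (fun k => snd t (nbr N i k) (nbrPort N i k)) false)
          (pcnt (fun k => snd t (nbr N i k) (nbrPort N i k)) true)
        + chOutP (flg t i) (pcnt (fun k => snd t (nbr N i k) (nbrPort N i k)) false))) % N.deg i

namespace Chan

variable {n : ℕ} {N : PortNetwork n} (S : Chan N)

def rcv (t : ℕ) (i : Fin n) (k : Fin (N.deg i)) : Option Bool :=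
  S.snd t (nbr N i k) (nbrPort N i k)
def P (t : ℕ) (i : Fin n) : ℕ := pcnt (S.rcv t i) false
def G (t : ℕ) (i : Fin n) : ℕ := pcnt (S.rcv t i) true
def W (t : ℕ) (i : Fin n) : ℕ := S.P t i + S.G t i
def oG (t : ℕ) (i : Fin n) : ℕ := chOutG S.gb (S.flg t i) (S.P t i) (S.G t i)
def oP (t : ℕ) (i : Fin n) : ℕ := chOutP (S.flg t i) (S.P t i)
def oW (t : ℕ) (i : Fin n) : ℕ := S.oG t i + S.oP t i
def sP (t : ℕ) (i : Fin n) : ℕ := pcnt (S.snd t i) false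
def sG (t : ℕ) (i : Fin n) : ℕ := pcnt (S.snd t i) true
def sW (t : ℕ) (i : Fin n) : ℕ := S.sP t i + S.sG t i
def PA (t : ℕ) : ℕ := ∑ i, S.sP t i
def GA (t : ℕ) : ℕ := ∑ i, S.sG t i
def SA (t : ℕ) : ℕ := S.PA t + S.GA t
def FL (t : ℕ) : ℕ := (univ.filter fun i => S.flg t i = true).card
def CV (t : ℕ) : ℕ := (univ.filter fun i => S.flg t i = true ∧ 0 < S.P t i).card
def GK (t : ℕ) : ℕ := ∑ i, if S.flg t i = true then S.G t i else 0
def RT : ℕ := (univ.filter fun i => S.spawn i = true).card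
def FT : ℕ := (univ.filter fun i => S.flag0 i = true).card

/-- restated step laws -/
lemma flg_succ (t : ℕ) (ht : 1 ≤ t) (i : Fin n) :
    S.flg (t+1) i = (S.flg t i && decide (S.P t i = 0)) := S.hflg t ht i

lemma snd_succ (t : ℕ) (ht : 1 ≤ t) (i : Fin n) (k : Fin (N.deg i)) :
    S.snd (t+1) i k =
      (if slot (N.deg i) (S.rot t i) (k : ℕ) < S.oG t i then some true
       else if slot (N.deg i) (S.rot t i) (k : ℕ) < S.oG t i + S.oP t i then some false
       else none) := S.hsnd t ht i k

lemma rot_succ (t : ℕ) (ht : 1 ≤ t) (i : Fin n) :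
    S.rot (t+1) i % N.deg i = (S.rot t i + S.oW t i) % N.deg i := S.hrot t ht i

/-! ### pointwise bounds and identities -/

lemma pcnt_pair_le {d : ℕ} (ms : Fin d → Option Bool) :
    pcnt ms false + pcnt ms true ≤ d := by
  have hd : Disjoint (univ.filter fun k => ms k = some false)
      (univ.filter fun k => ms k = some true) := by
    rw [Finset.disjoint_left]; intro k hk hk'
    simp only [mem_filter] at hk hk'
    rw [hk.2] at hk'; simpa using hk'.2
  calc pcnt ms false + pcnt ms true
      = ((univ.filter fun k => ms k = some false) ∪ (univ.filter fun k => ms k = some true)).card := (Finset.card_union_of_disjoint hd).symm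
    _ ≤ (univ : Finset (Fin d)).card := Finset.card_le_card (Finset.subset_univ _)
    _ = d := by simp

lemma W_le (t : ℕ) (i : Fin n) : S.W t i ≤ N.deg i := pcnt_pair_le _

lemma oW_le (t : ℕ) (i : Fin n) : S.oW t i ≤ S.W t i := by
  unfold oW oG oP chOutG chOutP W
  by_cases hf : S.flg t i = true <;> by_cases hp : 0 < S.P t i <;>
    simp [hf, hp] <;> (try split_ifs) <;> omega

lemma oP_acct (t : ℕ) (i : Fin n) :
    S.oP t i + (if S.flg t i = true ∧ 0 < S.P t i then 1 else 0) = S.P t i := by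
  unfold oP chOutP
  split_ifs <;> omega

lemma oG_acct (t : ℕ) (i : Fin n) :
    S.oG t i + (if S.flg t i = true then S.G t i else 0) =
      S.G t i + (if S.flg t i = true ∧ 0 < S.P t i then (if S.gb then 1 else 0) else 0) := by
  unfold oG chOutG
  cases hf : S.flg t i <;> by_cases hp : 0 < S.P t i <;> cases hgb : S.gb <;>
    simp [hf, hp, hgb] <;> omega

/-! ### next-round send counts -/

lemma sG_succ (t : ℕ) (ht : 1 ≤ t) (i : Fin n) : S.sG (t+1) i = S.oG t i := by
  have hle : S.oG t i ≤ N.deg i := le_trans (by unfold oW; omega) (le_trans (S.oW_le t i) (S.W_le t i))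
  unfold sG pcnt
  have : (univ.filter fun k : Fin (N.deg i) => S.snd (t+1) i k = some true) =
      (univ.filter fun k : Fin (N.deg i) => slot (N.deg i) (S.rot t i) (k : ℕ) < S.oG t i) := by
    ext k
    simp only [mem_filter, mem_univ, true_and, S.snd_succ t ht i k]
    split_ifs with h1 h2
    · simp [h1]
    · simp [h1]
    · simp [h1]
  rw [this, card_slot_lt (S.hdeg i) _ _ hle]

lemma sP_succ (t : ℕ) (ht : 1 ≤ t) (i : Fin n) : S.sP (t+1) i = S.oP t i := by
  have hle : S.oG t i + S.oP t i ≤ N.deg i := le_trans (S.oW_le t i) (S.W_le t i)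
  unfold sP pcnt
  have : (univ.filter fun k : Fin (N.deg i) => S.snd (t+1) i k = some false) =
      (univ.filter fun k : Fin (N.deg i) =>
        S.oG t i ≤ slot (N.deg i) (S.rot t i) (k : ℕ) ∧
        slot (N.deg i) (S.rot t i) (k : ℕ) < S.oG t i + S.oP t i) := by
    ext k
    simp only [mem_filter, mem_univ, true_and, S.snd_succ t ht i k]
    split_ifs with h1 h2
    · simp; omega
    · simp; omega
    · simp; omega
  rw [this, card_slot_between (S.hdeg i) _ _ _ (by omega) hle]
  omega

lemma snd_ne_none_iff (t : ℕ) (ht : 1 ≤ t) (i : Fin n) (k : Fin (N.deg i)) :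
    S.snd (t+1) i k ≠ none ↔ slot (N.deg i) (S.rot t i) (k : ℕ) < S.oW t i := by
  rw [S.snd_succ t ht i k]
  unfold oW
  split_ifs with h1 h2
  · simp; omega
  · simp; omega
  · simp; omega

end Chan
end MWA
namespace MWA
namespace Chan
open Finset

variable {n : ℕ} {N : PortNetwork n} (S : Chan N)

/-! ### global transport and counting -/

lemma sum_rcv (t : ℕ) (g : Option Bool → ℕ) :
    ∑ i, ∑ k, g (S.rcv t i k) = ∑ i, ∑ k, g (S.snd t i k) := by
  rw [Finset.sum_sigma' univ (fun i => (univ : Finset (Fin (N.deg i))))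
      (fun i k => g (S.rcv t i k)),
    Finset.sum_sigma' univ (fun i => (univ : Finset (Fin (N.deg i))))
      (fun i k => g (S.snd t i k))]
  exact sum_flip N (fun z => g (S.snd t z.1 z.2))

lemma pcnt_eq_sum {d : ℕ} (ms : Fin d → Option Bool) (v : Bool) :
    pcnt ms v = ∑ k, (if ms k = some v then 1 else 0) := Finset.card_filter _ _

lemma sum_P (t : ℕ) : ∑ i, S.P t i = S.PA t := by
  unfold P PA sP
  simp only [pcnt_eq_sum]
  exact S.sum_rcv t (fun o => if o = some false then 1 else 0)

lemma sum_G (t : ℕ) : ∑ i, S.G t i = S.GA t := by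
  unfold G GA sG
  simp only [pcnt_eq_sum]
  exact S.sum_rcv t (fun o => if o = some true then 1 else 0)

lemma sum_W (t : ℕ) : ∑ i, S.W t i = S.SA t := by
  unfold W SA
  rw [Finset.sum_add_distrib, S.sum_P, S.sum_G]

/-! ### global step laws -/

lemma card_eq_sum_ite (p : Fin n → Prop) [DecidablePred p] :
    (univ.filter p).card = ∑ i, (if p i then 1 else 0) := Finset.card_filter _ _

lemma PA_succ (t : ℕ) (ht : 1 ≤ t) : S.PA (t+1) + S.CV t = S.PA t := by
  unfold PA CV
  calc ∑ i, S.sP (t+1) i + (univ.filter fun i => S.flg t i = true ∧ 0 < S.P t i).card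
      = ∑ i, S.oP t i + ∑ i, (if S.flg t i = true ∧ 0 < S.P t i then 1 else 0) := by
        rw [card_eq_sum_ite]
        congr 1
        exact Finset.sum_congr rfl (fun i _ => S.sP_succ t ht i)
    _ = ∑ i, (S.oP t i + (if S.flg t i = true ∧ 0 < S.P t i then 1 else 0)) :=
        (Finset.sum_add_distrib).symm
    _ = ∑ i, S.P t i := Finset.sum_congr rfl (fun i _ => S.oP_acct t i)
    _ = ∑ i, S.sP t i := S.sum_P t

lemma FL_succ (t : ℕ) (ht : 1 ≤ t) : S.FL (t+1) + S.CV t = S.FL t := by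
  unfold FL CV
  rw [card_eq_sum_ite, card_eq_sum_ite, card_eq_sum_ite, ← Finset.sum_add_distrib]
  apply Finset.sum_congr rfl
  intro i _
  rw [S.flg_succ t ht i]
  by_cases hf : S.flg t i = true <;> by_cases hp : S.P t i = 0 <;> simp [hf, hp] <;> omega

lemma GA_succ (t : ℕ) (ht : 1 ≤ t) :
    S.GA (t+1) + S.GK t = S.GA t + (if S.gb then S.CV t else 0) := by
  have h1 : S.GA (t+1) = ∑ i, S.oG t i := by
    unfold GA; exact Finset.sum_congr rfl (fun i _ => S.sG_succ t ht i)
  have h2 : (if S.gb then S.CV t else 0)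
      = ∑ i, (if S.flg t i = true ∧ 0 < S.P t i then (if S.gb then 1 else 0) else 0) := by
    cases hgb : S.gb
    · simp [hgb]
    · simp only [hgb, if_true]
      unfold CV
      rw [card_eq_sum_ite]
  rw [h1, h2]
  unfold GK
  rw [← Finset.sum_add_distrib, ← S.sum_G t, ← Finset.sum_add_distrib]
  exact Finset.sum_congr rfl (fun i _ => S.oG_acct t i)

end Chan
end MWA
namespace MWA
namespace Chan
open Finset

variable {n : ℕ} {N : PortNetwork n} (S : Chan N)

/-! ### base values at t = 1 -/

lemma card_val_zero {d : ℕ} (hd : 0 < d) :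
    (univ.filter fun k : Fin d => (k : ℕ) = 0).card = 1 := by
  have h : (univ.filter fun k : Fin d => (k : ℕ) = 0) = {⟨0, hd⟩} := by
    ext k; simp [Fin.ext_iff]
  rw [h, card_singleton]

lemma sP_one (i : Fin n) : S.sP 1 i = if S.spawn i = true then 1 else 0 := by
  unfold sP pcnt
  split_ifs with h
  · have he : (univ.filter fun k : Fin (N.deg i) => S.snd 1 i k = some false)
        = (univ.filter fun k : Fin (N.deg i) => (k : ℕ) = 0) := by
      ext k
      simp only [mem_filter, mem_univ, true_and, S.hsnd1 i k, h, true_and]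
      split_ifs with h2 <;> simp [h2]
    rw [he, card_val_zero (S.hdeg i)]
  · have he : (univ.filter fun k : Fin (N.deg i) => S.snd 1 i k = some false) = ∅ := by
      ext k
      simp only [mem_filter, mem_univ, true_and, S.hsnd1 i k, h]
      simp
    rw [he, card_empty]

lemma sG_one (i : Fin n) : S.sG 1 i = 0 := by
  unfold sG pcnt
  have he : (univ.filter fun k : Fin (N.deg i) => S.snd 1 i k = some true) = ∅ := by
    ext k
    simp only [mem_filter, mem_univ, true_and, S.hsnd1 i k]
    split_ifs <;> simp
  rw [he, card_empty]

lemma PA_one : S.PA 1 = S.RT := by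
  unfold PA RT
  rw [card_eq_sum_ite]
  exact Finset.sum_congr rfl (fun i _ => S.sP_one i)

lemma GA_one : S.GA 1 = 0 :=
  Finset.sum_eq_zero (fun i _ => S.sG_one i)

lemma FL_one : S.FL 1 = S.FT := by
  unfold FL FT
  congr 1
  ext i
  simp [S.hflg1 i]

/-! ### monotonicity and invariants -/

lemma GK_le_GA (t : ℕ) : S.GK t ≤ S.GA t := by
  rw [← S.sum_G t]
  unfold GK
  apply Finset.sum_le_sum
  intro i _
  split_ifs <;> omega

lemma gbCV_le (t : ℕ) : (if S.gb then S.CV t else 0) ≤ S.CV t := by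
  split_ifs <;> omega

lemma SA_def' (t : ℕ) : S.SA t = ∑ i, S.sW t i := by
  unfold SA PA GA sW
  rw [Finset.sum_add_distrib]

lemma SA_succ_le (t : ℕ) (ht : 1 ≤ t) : S.SA (t+1) ≤ S.SA t := by
  have h1 := S.PA_succ t ht
  have h2 := S.GA_succ t ht
  have h3 := S.gbCV_le t
  unfold SA
  omega

lemma invariant (t : ℕ) (ht : 1 ≤ t) : S.PA t + S.FT = S.RT + S.FL t := by
  induction t, ht using Nat.le_induction with
  | base => rw [S.PA_one, S.FL_one]
  | succ t ht ih =>
    have h1 := S.PA_succ t ht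
    have h2 := S.FL_succ t ht
    omega

lemma step_mono (f : ℕ → ℕ) (hstep : ∀ s, 1 ≤ s → f (s+1) ≤ f s) :
    ∀ a b, 1 ≤ a → a ≤ b → f b ≤ f a := by
  intro a b ha hab
  induction b, hab using Nat.le_induction with
  | base => exact le_rfl
  | succ b hb ih => exact le_trans (hstep b (by omega)) ih

/-- a common stabilization time for all the global counters -/
lemma exists_T : ∃ T, 1 ≤ T ∧ (∀ t, T ≤ t → S.SA t = S.SA T) ∧
    (∀ t, T ≤ t → S.PA t = S.PA T) ∧ (∀ t, T ≤ t → S.FL t = S.FL T) ∧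
    (∀ t, T ≤ t → S.GA t = S.GA T) := by
  obtain ⟨T', hT'⟩ := exists_stab (fun s => S.SA (s+1) + S.PA (s+1) + S.FL (s+1))
    (by
      intro s
      have h1 := S.SA_succ_le (s+1) (by omega)
      have h2 := S.PA_succ (s+1) (by omega)
      have h3 := S.FL_succ (s+1) (by omega)
      show S.SA (s+1+1) + S.PA (s+1+1) + S.FL (s+1+1) ≤ S.SA (s+1) + S.PA (s+1) + S.FL (s+1)
      omega)
  refine ⟨T' + 1, by omega, ?_⟩
  have key : ∀ t, T' + 1 ≤ t →
      S.SA t = S.SA (T'+1) ∧ S.PA t = S.PA (T'+1) ∧ S.FL t = S.FL (T'+1) := by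
    intro t ht
    obtain ⟨s, rfl⟩ : ∃ s, t = s + 1 := ⟨t - 1, by omega⟩
    have hsum := hT' s (by omega)
    have hSA := step_mono S.SA S.SA_succ_le (T'+1) (s+1) (by omega) (by omega)
    have hPA := step_mono S.PA (fun u hu => by have := S.PA_succ u hu; omega)
      (T'+1) (s+1) (by omega) (by omega)
    have hFL := step_mono S.FL (fun u hu => by have := S.FL_succ u hu; omega)
      (T'+1) (s+1) (by omega) (by omega)
    omega
  refine ⟨fun t ht => (key t ht).1, fun t ht => (key t ht).2.1, fun t ht => (key t ht).2.2, ?_⟩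
  intro t ht
  have h1 := (key t ht).1
  have h2 := (key t ht).2.1
  unfold SA at h1
  omega

/-! ### consequences of stabilization: no kills -/

section Stab

variable (T : ℕ) (hT1 : 1 ≤ T)
  (hSA : ∀ t, T ≤ t → S.SA t = S.SA T) (hFL : ∀ t, T ≤ t → S.FL t = S.FL T)
  (hPA : ∀ t, T ≤ t → S.PA t = S.PA T) (hGA : ∀ t, T ≤ t → S.GA t = S.GA T)

include hT1 hFL in
lemma CV_zero : ∀ t, T ≤ t → S.CV t = 0 := by
  intro t ht
  have h1 := S.FL_succ t (by omega)
  have h2 := hFL t ht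
  have h3 := hFL (t+1) (by omega)
  omega

include hT1 hFL hGA in
lemma GK_zero : ∀ t, T ≤ t → S.GK t = 0 := by
  intro t ht
  have h1 := S.GA_succ t (by omega)
  have h2 := S.CV_zero T hT1 hFL t ht
  have h3 := hGA t ht
  have h4 := hGA (t+1) (by omega)
  have h5 : (if S.gb then S.CV t else 0) ≤ S.CV t := S.gbCV_le t
  omega

include hT1 hFL hGA in
lemma flg_noPG : ∀ t, T ≤ t → ∀ i, S.flg t i = true → S.P t i = 0 ∧ S.G t i = 0 := by
  intro t ht i hf
  constructor
  · have h1 := S.CV_zero T hT1 hFL t ht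
    unfold CV at h1
    rw [Finset.card_eq_zero, Finset.eq_empty_iff_forall_notMem] at h1
    have := h1 i
    simp only [mem_filter, mem_univ, true_and] at this
    by_contra hc
    exact this ⟨hf, by omega⟩
  · have h1 := S.GK_zero T hT1 hFL hGA t ht
    unfold GK at h1
    rw [Finset.sum_eq_zero_iff] at h1
    have := h1 i (mem_univ i)
    rwa [if_pos hf] at this

include hT1 hFL hGA in
lemma oW_eq_W : ∀ t, T ≤ t → ∀ i, S.oW t i = S.W t i := by
  intro t ht i
  by_cases hf : S.flg t i = true
  · obtain ⟨hP, hG⟩ := S.flg_noPG T hT1 hFL hGA t ht i hf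
    unfold oW oG oP chOutG chOutP W
    rw [hP, hG]
    simp [hf]
  · unfold oW oG oP chOutG chOutP W
    simp [hf]
    omega

end Stab

lemma sW_succ (t : ℕ) (ht : 1 ≤ t) (i : Fin n) : S.sW (t+1) i = S.oW t i := by
  unfold sW oW
  rw [S.sP_succ t ht i, S.sG_succ t ht i]
  omega

end Chan
end MWA
namespace MWA
open Finset

lemma add_mod_right_mod (a b d : ℕ) : (a + b % d) % d = (a + b) % d := by
  rw [Nat.add_mod a (b % d), Nat.mod_mod_of_dvd _ dvd_rfl, ← Nat.add_mod]

/-- rotor coverage: if a node keeps sending via a rotor, every port is used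
infinitely often. -/
lemma cover (d : ℕ) (hd : 0 < d) (T : ℕ) (k r : ℕ → ℕ)
    (hr : ∀ t, T ≤ t → r (t+1) % d = (r t + k t) % d)
    (hk : ∀ t, T ≤ t → k t ≤ d)
    (hio : ∀ t₀, ∃ t, t₀ ≤ t ∧ 0 < k t)
    (q : ℕ) (hq : q < d) (t₀ : ℕ) (ht₀ : T ≤ t₀) :
    ∃ t, t₀ ≤ t ∧ slot d (r t) q < k t := by
  set C : ℕ → ℕ := fun s => ∑ u ∈ Finset.range s, k (t₀ + u) with hC
  have hC0 : C 0 = 0 := by simp [hC]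
  have hCsucc : ∀ s, C (s+1) = C s + k (t₀ + s) := by
    intro s; simp [hC, Finset.sum_range_succ]
  have hCmono : ∀ a b, a ≤ b → C a ≤ C b := by
    intro a b hab
    apply Finset.sum_le_sum_of_subset
    exact Finset.range_subset_range.mpr hab
  have hub : ∀ B, ∃ s, B < C s := by
    intro B
    induction B with
    | zero =>
      obtain ⟨t, ht, hkt⟩ := hio t₀
      have h1 := hCsucc (t - t₀)
      have he : t₀ + (t - t₀) = t := by omega
      rw [he] at h1
      exact ⟨t - t₀ + 1, by omega⟩
    | succ B ih =>
      obtain ⟨s, hs⟩ := ih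
      obtain ⟨t, ht, hkt⟩ := hio (t₀ + s)
      have h1 := hCsucc (t - t₀)
      have h2 : C s ≤ C (t - t₀) := hCmono _ _ (by omega)
      have he : t₀ + (t - t₀) = t := by omega
      rw [he] at h1
      exact ⟨t - t₀ + 1, by omega⟩
  have hrot : ∀ s, r (t₀ + s) % d = (r t₀ + C s) % d := by
    intro s
    induction s with
    | zero => simp [hC0]
    | succ s ih =>
      have h1 : r (t₀ + s + 1) % d = (r (t₀ + s) + k (t₀ + s)) % d := hr _ (by omega)
      have h2 : (r (t₀ + s) + k (t₀ + s)) % d = (r t₀ + C s + k (t₀ + s)) % d :=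
        Nat.ModEq.add_right _ ih
      have h3 : r t₀ + C s + k (t₀ + s) = r t₀ + C (s+1) := by rw [hCsucc]; ring
      have he : t₀ + (s + 1) = t₀ + s + 1 := by omega
      rw [he, h1, h2, h3]
  obtain ⟨s, hs1, hs2⟩ := exists_cross C hC0 hub (slot d (r t₀) q)
  refine ⟨t₀ + s, by omega, ?_⟩
  have hks := hCsucc s
  have hylt : slot d (r t₀) q - C s < d := by
    have := slot_lt hd (r t₀) q; omega
  have hkey : slot d (r (t₀ + s)) q = slot d (r t₀) q - C s := by
    apply mod_cancel (slot_lt hd _ _) hylt (r := r (t₀ + s))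
    rw [slot_add hd]
    rw [← add_mod_right_mod (slot d (r t₀) q - C s) (r (t₀ + s)) d, hrot s,
      add_mod_right_mod]
    have h4 : slot d (r t₀) q - C s + (r t₀ + C s) = slot d (r t₀) q + r t₀ := by omega
    rw [h4, slot_add hd]
  omega

end MWA
namespace MWA
namespace Chan
open Finset

variable {n : ℕ} {N : PortNetwork n} (S : Chan N)

lemma W_pos_of_rcv (t : ℕ) (i : Fin n) (k : Fin (N.deg i)) (h : S.rcv t i k ≠ none) :
    0 < S.W t i := by
  unfold W P G
  rcases ho : S.rcv t i k with _ | v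
  · exact absurd ho h
  · cases v
    · have hm : k ∈ univ.filter (fun k' => S.rcv t i k' = some false) := by
        simp [ho]
      have := Finset.card_pos.mpr ⟨k, hm⟩
      unfold pcnt
      omega
    · have hm : k ∈ univ.filter (fun k' => S.rcv t i k' = some true) := by
        simp [ho]
      have := Finset.card_pos.mpr ⟨k, hm⟩
      unfold pcnt
      omega

lemma flg_mono (t : ℕ) (ht : 1 ≤ t) (i : Fin n) (h : S.flg (t+1) i = true) :
    S.flg t i = true := by
  rw [S.flg_succ t ht i, Bool.and_eq_true] at h
  exact h.1

lemma GK_zero_of_FL (t : ℕ) (h : S.FL t = 0) : S.GK t = 0 := by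
  unfold FL at h
  rw [Finset.card_eq_zero, Finset.eq_empty_iff_forall_notMem] at h
  apply Finset.sum_eq_zero
  intro i _
  rw [if_neg]
  intro hf
  exact h i (by simp [hf])

lemma GA_zero_of_not_gb (hgb : S.gb = false) (t : ℕ) (ht : 1 ≤ t) : S.GA t = 0 := by
  induction t, ht using Nat.le_induction with
  | base => exact S.GA_one
  | succ t ht ih =>
    have h1 := S.GA_succ t ht
    rw [hgb] at h1
    simp at h1
    omega

section Live

variable (T : ℕ) (hT1 : 1 ≤ T)
  (hSA : ∀ t, T ≤ t → S.SA t = S.SA T) (hPA : ∀ t, T ≤ t → S.PA t = S.PA T)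
  (hFL : ∀ t, T ≤ t → S.FL t = S.FL T) (hGA : ∀ t, T ≤ t → S.GA t = S.GA T)

include hSA hT1 in
lemma exists_io (hpos : 0 < S.SA T) :
    ∃ i : Fin n, ∀ t₀, ∃ t, t₀ ≤ t ∧ 0 < S.sW t i := by
  by_contra hc
  push_neg at hc
  choose g hg using hc
  set B := Finset.univ.sup g with hB
  have ht : T ≤ max B T := le_max_right _ _
  have h1 : S.SA (max B T) = S.SA T := hSA _ ht
  have h2 : S.SA (max B T) = ∑ i, S.sW (max B T) i := S.SA_def' _
  have h3 : ∀ i : Fin n, S.sW (max B T) i = 0 := by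
    intro i
    have := hg i (max B T) (le_trans (Finset.le_sup (mem_univ i)) (le_max_left _ _))
    omega
  rw [Finset.sum_eq_zero (fun i _ => h3 i)] at h2
  omega

include hT1 in
lemma io_ports (i : Fin n) (hio : ∀ t₀, ∃ t, t₀ ≤ t ∧ 0 < S.sW t i)
    (q : Fin (N.deg i)) (t₀ : ℕ) : ∃ t, t₀ ≤ t ∧ S.snd t i q ≠ none := by
  have hcov := cover (N.deg i) (S.hdeg i) T (fun t => S.oW t i) (fun t => S.rot t i)
    (fun t ht => S.rot_succ t (le_trans hT1 ht) i)
    (fun t _ => le_trans (S.oW_le t i) (S.W_le t i))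
    (by
      intro s₀
      show ∃ t, s₀ ≤ t ∧ 0 < S.oW t i
      obtain ⟨t, ht, hw⟩ := hio (max (s₀ + 1) 2)
      refine ⟨t - 1, by omega, ?_⟩
      have h1 : S.sW (t - 1 + 1) i = S.oW (t - 1) i := S.sW_succ (t-1) (by omega) i
      have h2 : t - 1 + 1 = t := by omega
      rw [h2] at h1
      omega)
    (q : ℕ) q.2 (max t₀ T) (le_max_right _ _)
  obtain ⟨t, ht, hslot⟩ := hcov
  refine ⟨t + 1, by omega, ?_⟩
  rw [S.snd_ne_none_iff t (by omega) i q]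
  exact hslot

include hT1 hSA hFL hGA in
lemma io_step (i j : Fin n) (hadj : N.adj i j = true)
    (hio : ∀ t₀, ∃ t, t₀ ≤ t ∧ 0 < S.sW t i) :
    ∀ t₀, ∃ t, t₀ ≤ t ∧ 0 < S.sW t j := by
  have hsym : N.adj j i = true := N.symm i j hadj
  set k : Fin (N.deg j) := N.port j ⟨i, hsym⟩ with hk
  have hnb : nbr N j k = i := nbr_port N j i hsym
  have hio' : ∀ t₀, ∃ t, t₀ ≤ t ∧ 0 < S.sW t (nbr N j k) := by rw [hnb]; exact hio
  intro t₀
  obtain ⟨t, ht, hne⟩ := S.io_ports T hT1 (nbr N j k) hio' (nbrPort N j k) (max t₀ T)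
  have hW : 0 < S.W t j := S.W_pos_of_rcv t j k hne
  refine ⟨t + 1, by omega, ?_⟩
  rw [S.sW_succ t (by omega) j, S.oW_eq_W T hT1 hFL hGA t (by omega) j]
  exact hW

include hT1 hSA hFL hGA in
lemma liveness (hpos : 0 < S.SA T) : ∀ (i : Fin n) (t₀ : ℕ), ∃ t, t₀ ≤ t ∧ 0 < S.W t i := by
  obtain ⟨i0, hi0⟩ := S.exists_io T hT1 hSA hpos
  have hall : ∀ j, ∀ t₀, ∃ t, t₀ ≤ t ∧ 0 < S.sW t j := by
    intro j
    have hconn := N.connected i0 j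
    induction hconn with
    | refl => exact hi0
    | tail hab hr ih => exact S.io_step T hT1 hSA hFL hGA _ _ hr ih
  intro i t₀
  have hd := S.hdeg i
  set k0 : Fin (N.deg i) := ⟨0, hd⟩ with hk0
  obtain ⟨t, ht, hne⟩ := S.io_ports T hT1 (nbr N i k0) (hall (nbr N i k0)) (nbrPort N i k0) t₀
  exact ⟨t, ht, S.W_pos_of_rcv t i k0 hne⟩

include hT1 hSA hFL hGA in
lemma FL_zero (hpos : 0 < S.SA T) : S.FL T = 0 := by
  by_contra h
  have hsets : ∀ t, T ≤ t →
      (univ.filter fun i => S.flg t i = true) = (univ.filter fun i => S.flg T i = true) := by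
    intro t ht
    induction t, ht using Nat.le_induction with
    | base => rfl
    | succ t ht ih =>
      have hsub : (univ.filter fun i => S.flg (t+1) i = true) ⊆
          (univ.filter fun i => S.flg t i = true) := by
        intro i hi
        simp only [mem_filter, mem_univ, true_and] at hi ⊢
        exact S.flg_mono t (by omega) i hi
      have hcard : (univ.filter fun i => S.flg t i = true).card ≤
          (univ.filter fun i => S.flg (t+1) i = true).card := by
        have h1 := hFL t ht
        have h2 := hFL (t+1) (by omega)
        unfold FL at h1 h2
        omega
      exact (Finset.eq_of_subset_of_card_le hsub hcard).trans ih
  have hne : (univ.filter fun i => S.flg T i = true).Nonempty := by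
    rw [← Finset.card_pos]
    unfold FL at h
    omega
  obtain ⟨v, hv⟩ := hne
  simp only [mem_filter, mem_univ, true_and] at hv
  obtain ⟨t, ht, hW⟩ := S.liveness T hT1 hSA hFL hGA hpos v T
  have hvflag : S.flg t v = true := by
    have := hsets t ht
    have hmem : v ∈ (univ.filter fun i => S.flg t i = true) := by
      rw [this]; simp [hv]
    simpa using hmem
  obtain ⟨hP, hG⟩ := S.flg_noPG T hT1 hFL hGA t ht v hvflag
  unfold W at hW
  omega

end Live

/-! ### The final channel dichotomy -/

theorem main_eternal
    (hcond : S.FT < S.RT ∨ (S.gb = true ∧ S.RT = S.FT ∧ 0 < S.RT)) :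
    ∀ (i : Fin n) (t₀ : ℕ), ∃ t, t₀ ≤ t ∧ 0 < S.W t i := by
  obtain ⟨T, hT1, hSA, hPA, hFL, hGA⟩ := S.exists_T
  have hpos : 0 < S.SA T := by
    rcases hcond with h | ⟨hgb, hRF, hR⟩
    · have hinv := S.invariant T hT1
      unfold SA
      omega
    · -- tie case with ghosts: the last flag death creates an immortal ghost
      by_contra hz
      push_neg at hz
      have hSAT : S.SA T = 0 := by omega
      have hPAT : S.PA T = 0 := by unfold SA at hSAT; omega
      have hFLT : S.FL T = 0 := by
        have hinv := S.invariant T hT1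
        omega
      -- last flag-death time
      have hFT : 0 < S.FT := by omega
      have hex : ∃ s, S.FL (s+1) = 0 := by
        refine ⟨T - 1, ?_⟩
        have : T - 1 + 1 = T := by omega
        rw [this]; exact hFLT
      set τ := Nat.find hex with hτ
      have hτ0 : S.FL (τ+1) = 0 := Nat.find_spec hex
      have hτ1 : 1 ≤ τ := by
        rcases Nat.eq_zero_or_pos τ with h0 | h
        · exfalso
          have := hτ0
          rw [h0] at this
          rw [S.FL_one] at this
          omega
        · exact h
      have hτpos : 0 < S.FL τ := by
        rcases Nat.eq_zero_or_pos (S.FL τ) with h0 | h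
        · exfalso
          obtain ⟨s, hse⟩ : ∃ s, τ = s + 1 := ⟨τ - 1, by omega⟩
          have hmin := Nat.find_min hex (m := s) (by omega)
          rw [hse] at h0
          exact hmin h0
        · exact h
      have hCV : S.CV τ = S.FL τ := by
        have := S.FL_succ τ hτ1
        omega
      have hGA1 : 0 < S.GA (τ+1) := by
        have h1 := S.GA_succ τ hτ1
        have h2 := S.GK_le_GA τ
        rw [hgb] at h1
        simp at h1
        omega
      -- flags stay dead, so GA never decreases afterwards
      have hFLdead : ∀ t, τ + 1 ≤ t → S.FL t = 0 := by
        intro t ht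
        have := step_mono S.FL (fun u hu => by have := S.FL_succ u hu; omega)
          (τ+1) t (by omega) ht
        omega
      have hGAgrow : ∀ t, τ + 1 ≤ t → 0 < S.GA t := by
        intro t ht
        induction t, ht using Nat.le_induction with
        | base => exact hGA1
        | succ t ht ih =>
          have h1 := S.GA_succ t (by omega)
          have h2 := S.GK_zero_of_FL t (hFLdead t ht)
          omega
      have hbig := hGAgrow (max T (τ+1)) (le_max_right _ _)
      have hSAbig : S.SA (max T (τ+1)) = 0 := by
        rw [hSA _ (le_max_left _ _)]; exact hSAT
      unfold SA at hSAbig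
      omega
  exact S.liveness T hT1 hSA hFL hGA hpos

theorem main_dies
    (hcond : ¬(S.FT < S.RT ∨ (S.gb = true ∧ S.RT = S.FT ∧ 0 < S.RT))) :
    ∃ T, ∀ t, T ≤ t → ∀ i, S.W t i = 0 := by
  obtain ⟨T, hT1, hSA, hPA, hFL, hGA⟩ := S.exists_T
  push_neg at hcond
  obtain ⟨hRF, hgbc⟩ := hcond
  have hzero : S.SA T = 0 := by
    by_contra hpos
    push_neg at hpos
    have hpos' : 0 < S.SA T := by omega
    have hFLT : S.FL T = 0 := S.FL_zero T hT1 hSA hFL hGA hpos'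
    have hinv := S.invariant T hT1
    -- PA T + FT = RT ≤ FT, so PA T = 0 and RT = FT
    have hPA0 : S.PA T = 0 := by omega
    have hRFeq : S.RT = S.FT := by omega
    have hGApos : 0 < S.GA T := by unfold SA at hpos'; omega
    cases hgb : S.gb with
    | false =>
      have := S.GA_zero_of_not_gb hgb T hT1
      omega
    | true =>
      have hRT0 : S.RT = 0 := by
        have := hgbc hgb hRFeq
        omega
      -- RT = FT = 0: nothing was ever sent
      have hSA1 : S.SA 1 = 0 := by
        unfold SA
        rw [S.PA_one, S.GA_one, hRT0]
      have := step_mono S.SA S.SA_succ_le 1 T (by omega) hT1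
      omega
  refine ⟨T, fun t ht i => ?_⟩
  have h1 : S.SA t = 0 := by rw [hSA t ht]; exact hzero
  have h2 := S.sum_W t
  rw [h1] at h2
  exact (Finset.sum_eq_zero_iff).mp h2 i (mem_univ i)

/-- if nothing is ever spawned the channel is silent from the start -/
lemma dead0 (hRT : S.RT = 0) : ∀ t, 1 ≤ t → ∀ i, S.W t i = 0 := by
  intro t ht i
  have hSA1 : S.SA 1 = 0 := by
    unfold SA
    rw [S.PA_one, S.GA_one, hRT]
  have hmono := step_mono S.SA S.SA_succ_le 1 t (by omega) ht
  have h2 := S.sum_W t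
  have h1 : S.SA t = 0 := by omega
  rw [h1] at h2
  exact (Finset.sum_eq_zero_iff).mp h2 i (mem_univ i)

end Chan
end MWA
namespace MWA
open Finset

lemma mkRot_val (d v : ℕ) (hd : 0 < d) : ((mkRot d v : Fin (d+1)) : ℕ) = v % d := by
  unfold mkRot
  rw [dif_pos hd]

variable {n : ℕ} (N : PortNetwork n) (x : Fin n → Vote)

def flagC (c : Bool) (t : ℕ) (i : Fin n) : Bool :=
  match st N x t i with
  | none => false
  | some s => (if c then s.1 else s.2).1

def rotC (c : Bool) (t : ℕ) (i : Fin n) : ℕ :=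
  match st N x t i with
  | none => 0
  | some s => ((if c then s.1 else s.2).2 : ℕ)

def chanOf (hn : 2 ≤ n) (c : Bool) : Chan N where
  gb := c
  spawn := fun i => decide (x i = (if c then Vote.one else Vote.zero))
  flag0 := fun i => decide (x i = (if c then Vote.zero else Vote.one))
  snd := fun t i k => snd2 N x c t i k
  flg := flagC N x c
  rot := rotC N x c
  hdeg := deg_pos N hn
  hsnd1 := by
    intro i k
    show snd2 N x c 1 i k = _
    rw [snd2_one]
    cases c <;> simp
  hflg1 := by
    intro i
    unfold flagC
    rw [st_one]
    cases c <;> simp [iSt]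
  hflg := by
    intro t ht i
    obtain ⟨s, hs⟩ := st_isSome N x t ht i
    have hflagg : flagC N x c t i = (if c then s.1 else s.2).1 := by
      unfold flagC; rw [hs]
    have hnext : flagC N x c (t+1) i =
        (if c then (chNext true (N.deg i) s.1 (fun k => rcv2 N x true t i k))
         else chNext false (N.deg i) s.2 (fun k => rcv2 N x false t i k)).1 := by
      unfold flagC; rw [st_succ_some N x t i s hs]
    rw [hnext, hflagg]
    cases c
    · rfl
    · rfl
  hsnd := by
    intro t ht i k
    obtain ⟨s, hs⟩ := st_isSome N x t ht i
    have hflagg : flagC N x c t i = (if c then s.1 else s.2).1 := by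
      unfold flagC; rw [hs]
    have hrott : rotC N x c t i = ((if c then s.1 else s.2).2 : ℕ) := by
      unfold rotC; rw [hs]
    show snd2 N x c (t+1) i k = _
    rw [snd2_succ_some N x c t i s hs k, hflagg, hrott]
    cases c
    · rfl
    · rfl
  hrot := by
    intro t ht i
    obtain ⟨s, hs⟩ := st_isSome N x t ht i
    have hd := deg_pos N hn i
    have hflagg : flagC N x c t i = (if c then s.1 else s.2).1 := by
      unfold flagC; rw [hs]
    have hrott : rotC N x c t i = ((if c then s.1 else s.2).2 : ℕ) := by
      unfold rotC; rw [hs]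
    have hnext : rotC N x c (t+1) i =
        ((if c then (chNext true (N.deg i) s.1 (fun k => rcv2 N x true t i k))
          else chNext false (N.deg i) s.2 (fun k => rcv2 N x false t i k)).2 : ℕ) := by
      unfold rotC; rw [st_succ_some N x t i s hs]
    rw [hnext, hflagg, hrott]
    cases c
    · simp only [if_false, Bool.false_eq_true, chNext]
      rw [mkRot_val _ _ hd]
      exact Nat.mod_mod_of_dvd _ dvd_rfl
    · simp only [if_true, chNext]
      rw [mkRot_val _ _ hd]
      exact Nat.mod_mod_of_dvd _ dvd_rfl

end MWA
namespace MWA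
open Finset

variable {n : ℕ} (N : PortNetwork n) (x : Fin n → Vote)

lemma yv_succ' (t : ℕ) (ht : 1 ≤ t) (i : Fin n) :
    yv N x (t+1) i =
      if 0 < pcnt (rcv2 N x true t i) false + pcnt (rcv2 N x true t i) true then 1
      else if 0 < pcnt (rcv2 N x false t i) false + pcnt (rcv2 N x false t i) true then 0
      else yv N x t i := by
  obtain ⟨s, hs⟩ := st_isSome N x t ht i
  rw [yv_succ_some N x t i s hs]
  rfl

lemma chanOf_W (hn : 2 ≤ n) (c : Bool) (t : ℕ) (i : Fin n) :
    (chanOf N x hn c).W t i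
      = pcnt (rcv2 N x c t i) false + pcnt (rcv2 N x c t i) true := rfl

lemma chanOf_RT (hn : 2 ≤ n) (c : Bool) :
    (chanOf N x hn c).RT
      = (univ.filter fun i => x i = (if c then Vote.one else Vote.zero)).card := by
  unfold Chan.RT chanOf
  congr 1
  ext i
  simp

lemma chanOf_FT (hn : 2 ≤ n) (c : Bool) :
    (chanOf N x hn c).FT
      = (univ.filter fun i => x i = (if c then Vote.zero else Vote.one)).card := by
  unfold Chan.FT chanOf
  congr 1
  ext i
  simp

theorem stabilize (hn : 2 ≤ n) :
    ∃ t', ∀ t, t' ≤ t → ∀ i, yv N x t i =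
      (if (univ.filter fun i => x i = Vote.zero).card ≤
          (univ.filter fun i => x i = Vote.one).card then (1 : Fin 2) else 0) := by
  set m := (univ.filter fun i => x i = Vote.zero).card with hm
  set p := (univ.filter fun i => x i = Vote.one).card with hp
  have hART : (chanOf N x hn true).RT = p := by rw [chanOf_RT]; rfl
  have hAFT : (chanOf N x hn true).FT = m := by rw [chanOf_FT]; rfl
  have hBRT : (chanOf N x hn false).RT = m := by rw [chanOf_RT]; rfl
  have hBFT : (chanOf N x hn false).FT = p := by rw [chanOf_FT]; rfl
  have hWA : ∀ t i, (chanOf N x hn true).W t i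
      = pcnt (rcv2 N x true t i) false + pcnt (rcv2 N x true t i) true := fun _ _ => rfl
  have hWB : ∀ t i, (chanOf N x hn false).W t i
      = pcnt (rcv2 N x false t i) false + pcnt (rcv2 N x false t i) true := fun _ _ => rfl
  by_cases hmp : m ≤ p
  · rw [if_pos hmp]
    by_cases hp0 : 0 < p
    · -- A-channel eternal, B-channel dies
      have hAet := (chanOf N x hn true).main_eternal (by
        rcases Nat.lt_or_ge m p with h | h
        · exact Or.inl (by omega)
        · exact Or.inr ⟨rfl, by omega, by omega⟩)
      obtain ⟨TB, hTB⟩ := (chanOf N x hn false).main_dies (by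
        push_neg
        refine ⟨by rw [hBRT, hBFT]; omega, fun hgb => absurd hgb (by simp [chanOf])⟩)
      have hpick : ∀ i : Fin n, ∃ t, max TB 1 ≤ t ∧ 0 < (chanOf N x hn true).W t i :=
        fun i => hAet i _
      choose g hg using hpick
      refine ⟨univ.sup g + 1, fun t ht i => ?_⟩
      have key : ∀ u, g i + 1 ≤ u → yv N x u i = 1 := by
        intro u hu
        induction u, hu using Nat.le_induction with
        | base =>
          have h1 := (hg i).1
          have h2 := (hg i).2
          rw [hWA] at h2
          rw [yv_succ' N x (g i) (by omega) i, if_pos h2]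
        | succ u hu ih =>
          have h1 := (hg i).1
          rw [yv_succ' N x u (by omega) i]
          by_cases hA : 0 < pcnt (rcv2 N x true u i) false + pcnt (rcv2 N x true u i) true
          · rw [if_pos hA]
          · have hB0 := hTB u (by omega) i
            rw [hWB] at hB0
            rw [if_neg hA, if_neg (by omega)]
            exact ih
      refine key t ?_
      have := Finset.le_sup (f := g) (mem_univ i)
      omega
    · -- nobody votes: m = p = 0, everything is silent and y keeps its initial value 1
      have hp0' : p = 0 := by omega
      have hm0 : m = 0 := by omega
      have hA0 := (chanOf N x hn true).dead0 (by omega)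
      have hB0 := (chanOf N x hn false).dead0 (by omega)
      refine ⟨1, fun t ht i => ?_⟩
      have hconst : ∀ u, 1 ≤ u → yv N x u i = yv N x 1 i := by
        intro u hu
        induction u, hu using Nat.le_induction with
        | base => rfl
        | succ u hu ih =>
          have hA := hA0 u hu i
          have hB := hB0 u hu i
          rw [hWA] at hA
          rw [hWB] at hB
          rw [yv_succ' N x u hu i, if_neg (by omega), if_neg (by omega)]
          exact ih
      rw [hconst t ht, yv_one, if_neg ?_]
      have hempty : (univ.filter fun j => x j = Vote.zero) = ∅ := by
        rw [← Finset.card_eq_zero]; omega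
      intro hxz
      have : i ∈ (univ.filter fun j => x j = Vote.zero) := by simp [hxz]
      rw [hempty] at this
      simp at this
  · -- p < m : B-channel eternal, A-channel dies, output 0
    rw [if_neg hmp]
    have hBet := (chanOf N x hn false).main_eternal (Or.inl (by omega))
    obtain ⟨TA, hTA⟩ := (chanOf N x hn true).main_dies (by
      push_neg
      refine ⟨by rw [hART, hAFT]; omega, fun _ h => ?_⟩
      rw [hART, hAFT] at h
      rw [hART]
      omega)
    have hpick : ∀ i : Fin n, ∃ t, max TA 1 ≤ t ∧ 0 < (chanOf N x hn false).W t i :=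
      fun i => hBet i _
    choose g hg using hpick
    refine ⟨univ.sup g + 1, fun t ht i => ?_⟩
    have key : ∀ u, g i + 1 ≤ u → yv N x u i = 0 := by
      intro u hu
      induction u, hu using Nat.le_induction with
      | base =>
        have h1 := (hg i).1
        have h2 := (hg i).2
        rw [hWB] at h2
        have hA0 := hTA (g i) (by omega) i
        rw [hWA] at hA0
        rw [yv_succ' N x (g i) (by omega) i, if_neg (by omega), if_pos h2]
      | succ u hu ih =>
        have h1 := (hg i).1
        have hA0 := hTA u (by omega) i
        rw [hWA] at hA0
        rw [yv_succ' N x u (by omega) i, if_neg (by omega)]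
        by_cases hB : 0 < pcnt (rcv2 N x false u i) false + pcnt (rcv2 N x false u i) true
        · rw [if_pos hB]
        · rw [if_neg hB]
          exact ih
    refine key t ?_
    have := Finset.le_sup (f := g) (mem_univ i)
    omega

theorem stabilize_one (N1 : PortNetwork 1) (x1 : Fin 1 → Vote) :
    ∃ t', ∀ t, t' ≤ t → ∀ i, yv N1 x1 t i =
      (if (univ.filter fun i => x1 i = Vote.zero).card ≤
          (univ.filter fun i => x1 i = Vote.one).card then (1 : Fin 2) else 0) := by
  refine ⟨1, fun t ht i => ?_⟩
  have hie : IsEmpty (Fin (N1.deg i)) := by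
    rw [deg_zero_of_one i N1]
    infer_instance
  have hpcnt : ∀ (c v : Bool) (u : ℕ), pcnt (rcv2 N1 x1 c u i) v = 0 := by
    intro c v u
    unfold pcnt
    rw [Finset.univ_eq_empty, Finset.filter_empty, Finset.card_empty]
  have hconst : ∀ u, 1 ≤ u → yv N1 x1 u i = yv N1 x1 1 i := by
    intro u hu
    induction u, hu using Nat.le_induction with
    | base => rfl
    | succ u hu ih =>
      rw [yv_succ' N1 x1 u hu i, hpcnt, hpcnt, hpcnt, hpcnt]
      simpa using ih
  rw [hconst t ht, yv_one]
  have huniv : (univ : Finset (Fin 1)) = {i} :=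
    Finset.eq_singleton_iff_unique_mem.mpr ⟨mem_univ i, fun j _ => Subsingleton.elim j i⟩
  rw [huniv, Finset.filter_singleton, Finset.filter_singleton]
  cases hv : x1 i <;> simp [hv]

end MWA

/-- majority testing with abstention (is
`|{i : x_i = 1}| ≥ |{i : x_i = 0}|`?) is computable. -/
theorem majority_with_abstention_computable :
    ComputableFamily
      (fun n (x : Fin n → Vote) =>
        if (Finset.univ.filter fun i => x i = Vote.zero).card ≤
            (Finset.univ.filter fun i => x i = Vote.one).card
        then (1 : Fin 2) else 0) := by
  refine ⟨MWA.Msg, MWA.Zt, MWA.algo, inferInstance, inferInstance,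
    fun d => inferInstance, ?_⟩
  intro n hn N x
  rcases Nat.lt_or_ge n 2 with h | h
  · have hn1 : n = 1 := by omega
    subst hn1
    exact MWA.stabilize_one N x
  · exact MWA.stabilize N x h
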